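/- The infinite series ∑_{n=1}^∞ 1/((2n-1)(4n-1)(4n-3)) converges to (ln 2)/2. -/

import Mathlib

open Real Filter Finset Topology

private noncomputable def hh : ℕ → ℝ := fun m => (harmonic m : ℝ)

private lemma hh_succ (m : ℕ) : hh (m + 1) = hh m + 1 / (m + 1) := by
  simp only [hh, harmonic_succ]
  push_cast
  ring

private noncomputable def gg : ℕ → ℝ := fun n =>
  1 / ((2 * ((n : ℝ) + 1) - 1) * (4 * ((n : ℝ) + 1) - 1) * (4 * ((n : ℝ) + 1) - 3))

private lemma gg_nonneg (n : ℕ) : 0 ≤ gg n := by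
  unfold gg
  have hn : (0:ℝ) ≤ (n : ℝ) := Nat.cast_nonneg n
  have h1 : (0:ℝ) < 2 * ((n : ℝ) + 1) - 1 := by linarith
  have h2 : (0:ℝ) < 4 * ((n : ℝ) + 1) - 1 := by linarith
  have h3 : (0:ℝ) < 4 * ((n : ℝ) + 1) - 3 := by linarith
  exact div_nonneg zero_le_one (mul_pos (mul_pos h1 h2) h3).le

private lemma key_sum (N : ℕ) :
    ∑ k ∈ range N, gg k = hh (4 * N) - 3/2 * hh (2 * N) + 1/2 * hh N := by
  induction N with
  | zero => simp [hh]
  | succ N ih =>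
    rw [Finset.sum_range_succ, ih,
      show 4 * (N + 1) = 4 * N + 1 + 1 + 1 + 1 by ring,
      show 2 * (N + 1) = 2 * N + 1 + 1 by ring,
      hh_succ, hh_succ, hh_succ, hh_succ, hh_succ, hh_succ, hh_succ]
    unfold gg
    have hn : (0:ℝ) ≤ (N : ℝ) := Nat.cast_nonneg N
    have h1 : (2 * ((N : ℝ) + 1) - 1) ≠ 0 := by nlinarith
    have h2 : (4 * ((N : ℝ) + 1) - 1) ≠ 0 := by nlinarith
    have h3 : (4 * ((N : ℝ) + 1) - 3) ≠ 0 := by nlinarith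
    have h2' : (((N : ℝ) + 1) * 4 - 1) ≠ 0 := by nlinarith
    have h3' : (((N : ℝ) + 1) * 4 - 3) ≠ 0 := by nlinarith
    push_cast
    field_simp
    ring

theorem stmt_4 : HasSum (fun n : ℕ+ => 1 / ((2*(n : ℝ)-1) * (4*(n : ℝ)-1) * (4*(n : ℝ)-3))) (Real.log 2 / 2) := by
  have hnat : HasSum gg (Real.log 2 / 2) := by
    rw [hasSum_iff_tendsto_nat_of_nonneg gg_nonneg]
    simp_rw [key_sum]
    -- e N := hh N - log N tends to γ
    have he : Tendsto (fun n : ℕ => hh n - Real.log n) atTop (𝓝 eulerMascheroniConstant) :=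
      Real.tendsto_harmonic_sub_log
    have h4 : Tendsto (fun N : ℕ => 4 * N) atTop atTop :=
      tendsto_atTop_mono (fun n => by dsimp; omega) tendsto_id
    have h2 : Tendsto (fun N : ℕ => 2 * N) atTop atTop :=
      tendsto_atTop_mono (fun n => by dsimp; omega) tendsto_id
    have big : Tendsto (fun N : ℕ =>
        (hh (4*N) - Real.log ((4*N : ℕ) : ℝ)) - 3/2 * (hh (2*N) - Real.log ((2*N : ℕ) : ℝ))
          + 1/2 * (hh N - Real.log N) + Real.log 2 / 2) atTop
        (𝓝 (eulerMascheroniConstant - 3/2 * eulerMascheroniConstant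
          + 1/2 * eulerMascheroniConstant + Real.log 2 / 2)) := by
      exact (((he.comp h4).sub ((he.comp h2).const_mul _)).add
        (he.const_mul _)).add tendsto_const_nhds
    have : eulerMascheroniConstant - 3/2 * eulerMascheroniConstant
        + 1/2 * eulerMascheroniConstant + Real.log 2 / 2 = Real.log 2 / 2 := by ring
    rw [this] at big
    refine big.congr' ?_
    filter_upwards [eventually_gt_atTop 0] with N hN
    have hN' : (N : ℝ) ≠ 0 := Nat.cast_ne_zero.mpr hN.ne'
    have l4 : Real.log ((4 * N : ℕ) : ℝ) = Real.log 4 + Real.log N := by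
      push_cast
      rw [Real.log_mul (by norm_num) hN']
    have l2 : Real.log ((2 * N : ℕ) : ℝ) = Real.log 2 + Real.log N := by
      push_cast
      rw [Real.log_mul (by norm_num) hN']
    have l42 : Real.log 4 = 2 * Real.log 2 := by
      rw [show (4:ℝ) = 2^2 by norm_num, Real.log_pow]
      push_cast; ring
    rw [l4, l2, l42]
    ring
  refine (Equiv.pnatEquivNat.symm.hasSum_iff
    (f := fun n : ℕ+ => 1 / ((2*(n : ℝ)-1) * (4*(n : ℝ)-1) * (4*(n : ℝ)-3)))
    (a := Real.log 2 / 2)).mp ?_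
  have heq : ((fun n : ℕ+ => 1 / ((2*(n : ℝ)-1) * (4*(n : ℝ)-1) * (4*(n : ℝ)-3)))
      ∘ Equiv.pnatEquivNat.symm) = gg := by
    funext n
    simp only [Function.comp_apply, Equiv.pnatEquivNat, Equiv.coe_fn_symm_mk, gg]
    norm_num [Nat.succPNat]
  rw [heq]
  exact hnat
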